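/- arXiv:1209.1364 — 5 statements merged into one kernel-verified Lean document; each statement's English description precedes it below -/
import Mathlib

section
/- Let A be a 3×3 real matrix with trace zero such that I + (k/2)A is invertible for a real number k ≠ 0. Then det((I + (k/2)A)⁻¹(I - (k/2)A)) = 1 if and only if det(A) = 0. -/
theorem stmt_4 (A : Matrix (Fin 3) (Fin 3) ℝ) (hA : A.trace = 0)
    (k : ℝ) (hk : k ≠ 0) (hinv : IsUnit (1 + (k/2) • A)) :
    ((1 + (k/2) • A)⁻¹ * (1 - (k/2) • A)).det = 1 ↔ A.det = 0 := by
  set c := k / 2 with hc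
  have hc0 : c ≠ 0 := by simpa [hc] using div_ne_zero hk (by norm_num : (2:ℝ) ≠ 0)
  have hdet : (1 + c • A).det ≠ 0 := by
    have := hinv.map Matrix.detMonoidHom
    simpa [Matrix.detMonoidHom, isUnit_iff_ne_zero] using this
  have htr : A 0 0 + A 1 1 + A 2 2 = 0 := by
    simpa [Matrix.trace_fin_three] using hA
  have key : (1 + c • A).det - (1 - c • A).det = 2 * c ^ 3 * A.det := by
    simp only [Matrix.det_fin_three, Matrix.add_apply, Matrix.sub_apply,
      Matrix.one_apply, Matrix.smul_apply, smul_eq_mul]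
    norm_num [Fin.ext_iff]
    linear_combination (k) * htr
  have hdetmul : ((1 + c • A)⁻¹ * (1 - c • A)).det
      = (1 + c • A).det⁻¹ * (1 - c • A).det := by
    rw [Matrix.det_mul, Matrix.det_nonsing_inv, Ring.inverse_eq_inv']
  rw [hdetmul]
  constructor
  · intro h
    have h2 : (1 - c • A).det = (1 + c • A).det := by
      field_simp at h; linarith
    have : 2 * c ^ 3 * A.det = 0 := by rw [← key, h2]; ring
    have hne : 2 * c ^ 3 ≠ 0 := by positivity
    exact by
      rcases mul_eq_zero.mp this with h' | h'
      · exact absurd h' hne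
      · exact h'
  · intro h
    have h2 : (1 + c • A).det = (1 - c • A).det := by
      have : (1 + c • A).det - (1 - c • A).det = 0 := by rw [key, h]; ring
      linarith
    rw [← h2]
    field_simp
end

section
/- Let V be a real vector space with convex functional φ, and let U(t) be the linear interpolant of Uⁿ⁻¹ and Uⁿ on [tₙ₋₁, tₙ] with U'(t) = (Uⁿ - Uⁿ⁻¹)/kₙ, and suppose ⟨(Uⁿ - Uⁿ⁻¹)/kₙ, v⟩ + a(Uⁿ, v) = 0 for all v. Define the residual 𝔕(t) := ⟨U'(t), U(t) - Uⁿ⟩ + φ(U(t)) - φ(Uⁿ) where φ(w) = (1/2)a(w,w). Then 𝔕(t) ≤ (tₙ - t)·ξₙ for all t ∈ [tₙ₋₁, tₙ], where ξₙ := -‖(Uⁿ - Uⁿ⁻¹)/kₙ‖² - (φ(Uⁿ) - φ(Uⁿ⁻¹))/kₙ. -/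
theorem stmt_11 {H : Type*} [NormedAddCommGroup H] [InnerProductSpace ℝ H]
    [CompleteSpace H]
    (a : LinearMap.BilinForm ℝ H)
    (hcont : Continuous fun p : H × H => a p.1 p.2)
    (hsym : ∀ x y : H, a x y = a y x)
    (hpsd : ∀ v : H, 0 ≤ a v v)
    (t0 t1 : ℝ) (ht : t0 < t1) (U0 U1 : H)
    (hscheme : ∀ v : H,
      inner ℝ ((t1 - t0)⁻¹ • (U1 - U0)) v + a U1 v = (0:ℝ))
    (t : ℝ) (htmem : t ∈ Set.Icc t0 t1) :
    (inner ℝ ((t1 - t0)⁻¹ • (U1 - U0))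
        ((((t - t0)/(t1 - t0)) • U1 + ((t1 - t)/(t1 - t0)) • U0) - U1) : ℝ)
      + (1/2) * a (((t - t0)/(t1 - t0)) • U1 + ((t1 - t)/(t1 - t0)) • U0)
                  (((t - t0)/(t1 - t0)) • U1 + ((t1 - t)/(t1 - t0)) • U0)
      - (1/2) * a U1 U1
    ≤ (t1 - t) *
        (-‖(t1 - t0)⁻¹ • (U1 - U0)‖^2
          - ((1/2) * a U1 U1 - (1/2) * a U0 U0) / (t1 - t0)) := by
  obtain ⟨ht0, ht1⟩ := htmem
  have hk : (0:ℝ) < t1 - t0 := by linarith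
  have hk' : (t1 - t0) ≠ 0 := ne_of_gt hk
  have hB : a U0 U1 = a U1 U0 := hsym U0 U1
  have hinner : ∀ v : H, (inner ℝ (U1 - U0) v : ℝ) = -((t1 - t0) * a U1 v) := by
    intro v
    have h := hscheme v
    rw [real_inner_smul_left] at h
    field_simp at h
    linarith
  have hnorm : ‖(t1 - t0)⁻¹ • (U1 - U0)‖^2
      = (t1 - t0)⁻¹ * (t1 - t0)⁻¹ * ((inner ℝ (U1 - U0) U1 : ℝ) - inner ℝ (U1 - U0) U0) := by
    rw [← real_inner_self_eq_norm_sq, real_inner_smul_left, real_inner_smul_right,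
      inner_sub_right]
    ring
  have hpos : 0 ≤ a U1 U1 - 2 * a U1 U0 + a U0 U0 := by
    have h := hpsd (U1 - U0)
    simp only [map_sub, LinearMap.sub_apply] at h
    linarith [hB, h]
  have hI1 : (inner ℝ U1 U1 : ℝ) = inner ℝ U1 U0 - (t1 - t0) * a U1 U1 := by
    have := hinner U1
    rw [inner_sub_left] at this
    have hc : (inner ℝ U1 U0 : ℝ) = inner ℝ U0 U1 := real_inner_comm U0 U1
    linarith
  have hI0 : (inner ℝ U0 U0 : ℝ) = inner ℝ U1 U0 + (t1 - t0) * a U1 U0 := by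
    have := hinner U0
    rw [inner_sub_left] at this
    linarith
  rw [hnorm]
  simp only [inner_sub_right, inner_add_right, inner_sub_left, real_inner_smul_left,
    real_inner_smul_right, map_add, map_smul, LinearMap.add_apply, LinearMap.smul_apply,
    smul_eq_mul, real_inner_comm U1 U0]
  rw [hI1, hI0, hB]
  set q : ℝ := inner ℝ U1 U0
  set A := a U1 U1
  set B := a U1 U0
  set C := a U0 U0
  have key : ((t1 - t)/(t1 - t0))^2 * (A - 2*B + C) ≤ ((t1 - t)/(t1 - t0)) * (A - 2*B + C) := by
    have h1 : 0 ≤ (t1 - t)/(t1 - t0) := div_nonneg (by linarith) (le_of_lt hk)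
    have h2 : (t1 - t)/(t1 - t0) ≤ 1 := by rw [div_le_one hk]; linarith
    have h3 := mul_le_mul_of_nonneg_right h2 h1
    nlinarith [mul_le_mul_of_nonneg_right h3 hpos]
  have key2 : (1/2)*((t1-t)/(t1-t0))^2*(A-2*B+C) ≤ (1/2)*((t1-t)/(t1-t0))*(A-2*B+C) := by
    linarith [key]
  refine le_trans (le_of_eq ?_) (key2.trans (le_of_eq ?_)) <;> field_simp <;> ring
end

section
/- Let H be a real Hilbert space, 𝔉 a bounded self-adjoint positive semidefinite operator on H, and U⁰, ..., Uᴺ ∈ H satisfy the implicit Euler scheme (Uⁿ - Uⁿ⁻¹)/kₙ + 𝔉(Uⁿ) = 0 with steps kₙ ≤ k_max. Then Σₙ₌₁ᴺ kₙ² ξₙ ≤ (1/4)·k_max²·(‖𝔉(U⁰)‖² - ‖𝔉(Uᴺ)‖²) ≤ (1/4)·k_max²·‖𝔉(U⁰)‖², where ξₙ = (1/2)⟨𝔉(Uⁿ⁻¹) - 𝔉(Uⁿ), 𝔉(Uⁿ)⟩. -/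
lemma tele_aux (g : ℕ → ℝ) : ∀ N, ∑ n ∈ Finset.Icc 1 N, (g (n-1) - g n) = g 0 - g N := by
  intro N
  induction N with
  | zero => simp
  | succ m ih =>
      rw [Finset.sum_Icc_succ_top (by omega), ih]
      simp

theorem stmt_13 {H : Type*} [NormedAddCommGroup H] [InnerProductSpace ℝ H]
    [CompleteSpace H]
    (F : H →L[ℝ] H) (hsa : IsSelfAdjoint F)
    (hpsd : ∀ v : H, (0:ℝ) ≤ inner ℝ (F v) v)
    (N : ℕ) (U : ℕ → H) (k : ℕ → ℝ) (kmax : ℝ)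
    (hk : ∀ n, 0 < k n) (hkmax : ∀ n, k n ≤ kmax)
    (hscheme : ∀ n, 1 ≤ n → n ≤ N →
      (k n)⁻¹ • (U n - U (n-1)) + F (U n) = 0) :
    (∑ n ∈ Finset.Icc 1 N,
        (k n)^2 * ((1/2) * inner ℝ (F (U (n-1)) - F (U n)) (F (U n)) : ℝ))
      ≤ (1/4) * kmax^2 * (‖F (U 0)‖^2 - ‖F (U N)‖^2) ∧
    (1/4) * kmax^2 * (‖F (U 0)‖^2 - ‖F (U N)‖^2)
      ≤ (1/4) * kmax^2 * ‖F (U 0)‖^2 := by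
  have hkm : 0 < kmax := lt_of_lt_of_le (hk 0) (hkmax 0)
  set g : ℕ → ℝ := fun n => ‖F (U n)‖^2 with hg
  have key : ∀ n ∈ Finset.Icc 1 N,
      (k n)^2 * ((1/2) * inner ℝ (F (U (n-1)) - F (U n)) (F (U n)) : ℝ)
      ≤ (1/4) * kmax^2 * (g (n-1) - g n) := by
    intro n hn
    simp only [Finset.mem_Icc] at hn
    have hs := hscheme n hn.1 hn.2
    have hstep : U (n-1) - U n = k n • F (U n) := by
      have h1 : (k n)⁻¹ • (U n - U (n-1)) = - F (U n) := by
        rwa [add_eq_zero_iff_eq_neg] at hs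
      have h2 : U n - U (n-1) = -(k n • F (U n)) := by
        rw [← smul_neg, ← h1, smul_smul, mul_inv_cancel₀ (hk n).ne', one_smul]
      have h3 := congrArg Neg.neg h2
      rwa [neg_sub, neg_neg] at h3
    set a : H := F (U (n-1))
    set b : H := F (U n)
    have hFdiff : a - b = k n • F b := by
      rw [← map_sub, hstep, map_smul]
    have hξ : (0:ℝ) ≤ inner ℝ (a - b) b := by
      rw [hFdiff, real_inner_smul_left]
      exact mul_nonneg (hk n).le (hpsd b)
    have hb : (inner ℝ (a - b) b : ℝ) = inner ℝ a b - ‖b‖^2 := by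
      rw [inner_sub_left, real_inner_self_eq_norm_sq]
    have hC : 2 * (inner ℝ a b : ℝ) ≤ ‖a‖^2 + ‖b‖^2 := by
      nlinarith [norm_sub_sq_real a b, sq_nonneg ‖a - b‖]
    have hk2 : (k n)^2 ≤ kmax^2 := by nlinarith [hk n, hkmax n]
    have h1 : (inner ℝ (a - b) b : ℝ) ≤ (‖a‖^2 - ‖b‖^2)/2 := by
      rw [hb]; linarith
    have h2 := mul_nonneg (sub_nonneg.2 hk2) hξ
    have h3 := mul_le_mul_of_nonneg_left h1 (sq_nonneg kmax)
    simp only [hg]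
    nlinarith [h2, h3]
  have tele : ∑ n ∈ Finset.Icc 1 N, (g (n-1) - g n) = g 0 - g N :=
    tele_aux g N
  constructor
  · calc (∑ n ∈ Finset.Icc 1 N,
        (k n)^2 * ((1/2) * inner ℝ (F (U (n-1)) - F (U n)) (F (U n)) : ℝ))
        ≤ ∑ n ∈ Finset.Icc 1 N, (1/4) * kmax^2 * (g (n-1) - g n) :=
          Finset.sum_le_sum key
      _ = (1/4) * kmax^2 * ∑ n ∈ Finset.Icc 1 N, (g (n-1) - g n) := by
          rw [Finset.mul_sum]
      _ = (1/4) * kmax^2 * (‖F (U 0)‖^2 - ‖F (U N)‖^2) := by rw [tele]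
  · have h0 : (0:ℝ) ≤ ‖F (U N)‖^2 := sq_nonneg _
    nlinarith [sq_nonneg kmax]
end

section
/- Let H be a real Hilbert space with a symmetric positive semidefinite bilinear form a, let V_H ⊆ V_h ⊆ H be closed subspaces, and let U_H ∈ V_H and U_h ∈ V_h satisfy ⟨U_H, v⟩ + k·a(U_H, v) = ⟨g, v⟩ for all v ∈ V_H and ⟨U_h, v⟩ + k·a(U_h, v) = ⟨g, v⟩ for all v ∈ V_h, for the same g ∈ H and k > 0. Then for any I_H U_h ∈ V_H: ‖U_H - U_h‖² + k·a(U_H - U_h, U_H - U_h) = ‖U_h - I_H U_h‖² + k·a(U_h - I_H U_h, U_h - I_H U_h) - ‖U_H - I_H U_h‖² - k·a(U_H - I_H U_h, U_H - I_H U_h). -/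
theorem stmt_15 {H : Type*} [NormedAddCommGroup H] [InnerProductSpace ℝ H]
    [CompleteSpace H]
    (a : LinearMap.BilinForm ℝ H)
    (hsym : ∀ x y : H, a x y = a y x)
    (hpsd : ∀ v : H, 0 ≤ a v v)
    (VH Vh : Submodule ℝ H) (hVH : IsClosed (VH : Set H))
    (hVh : IsClosed (Vh : Set H)) (hsub : VH ≤ Vh)
    (k : ℝ) (hk : 0 < k) (g : H) (UH Uh : H)
    (hUH : UH ∈ VH) (hUh : Uh ∈ Vh)
    (heqH : ∀ v ∈ VH, (inner ℝ UH v : ℝ) + k * a UH v = inner ℝ g v)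
    (heqh : ∀ v ∈ Vh, (inner ℝ Uh v : ℝ) + k * a Uh v = inner ℝ g v)
    (IHUh : H) (hIH : IHUh ∈ VH) :
    ‖UH - Uh‖^2 + k * a (UH - Uh) (UH - Uh)
      = ‖Uh - IHUh‖^2 + k * a (Uh - IHUh) (Uh - IHUh)
        - ‖UH - IHUh‖^2 - k * a (UH - IHUh) (UH - IHUh) := by
  have hv : UH - IHUh ∈ VH := VH.sub_mem hUH hIH
  have h1 := heqH (UH - IHUh) hv
  have h2 := heqh (UH - IHUh) (hsub hv)
  simp only [← real_inner_self_eq_norm_sq]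
  simp only [inner_sub_left, inner_sub_right, map_sub, LinearMap.sub_apply] at h1 h2 ⊢
  have s1 := hsym UH Uh
  have s2 := hsym UH IHUh
  have s3 := hsym Uh IHUh
  have t1 := real_inner_comm UH Uh
  have t2 := real_inner_comm UH IHUh
  have t3 := real_inner_comm Uh IHUh
  have key : (inner ℝ UH UH : ℝ) - inner ℝ Uh UH - (inner ℝ UH IHUh - inner ℝ Uh IHUh)
      + k * ((a UH UH - a Uh UH) - (a UH IHUh - a Uh IHUh)) = 0 := by linarith
  nlinarith [key]
end

section
/- Under the assumptions of the nested Galerkin problems (U_H ∈ V_H and U_h ∈ V_h solving ⟨U, v⟩ + k·a(U, v) = ⟨g, v⟩ on their respective spaces, V_H ⊆ V_h), the coarsening error bound ‖U_H - U_h‖² ≤ ‖U_h - I_H U_h‖² + k·a(U_h - I_H U_h, U_h - I_H U_h) holds for every I_H U_h ∈ V_H. -/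
theorem stmt_16 {H : Type*} [NormedAddCommGroup H] [InnerProductSpace ℝ H]
    [CompleteSpace H]
    (a : LinearMap.BilinForm ℝ H)
    (hcont : Continuous fun p : H × H => a p.1 p.2)
    (hsym : ∀ x y : H, a x y = a y x)
    (hpsd : ∀ v : H, 0 ≤ a v v)
    (VH Vh : Submodule ℝ H) (hVH : IsClosed (VH : Set H))
    (hVh : IsClosed (Vh : Set H)) (hsub : VH ≤ Vh)
    (k : ℝ) (hk : 0 < k) (g : H) (UH Uh : H)
    (hUH : UH ∈ VH) (hUh : Uh ∈ Vh)
    (heqH : ∀ v ∈ VH, (inner ℝ UH v : ℝ) + k * a UH v = inner ℝ g v)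
    (heqh : ∀ v ∈ Vh, (inner ℝ Uh v : ℝ) + k * a Uh v = inner ℝ g v)
    (IHUh : H) (hIH : IHUh ∈ VH) :
    ‖UH - Uh‖^2 ≤ ‖Uh - IHUh‖^2 + k * a (Uh - IHUh) (Uh - IHUh) := by
  set e := UH - Uh with he
  set d := Uh - IHUh with hd
  have hed : e + d = UH - IHUh := by rw [he, hd]; abel
  have hmem : e + d ∈ VH := by rw [hed]; exact VH.sub_mem hUH hIH
  -- Galerkin orthogonality
  have hG : ∀ v ∈ VH, (inner ℝ e v : ℝ) + k * a e v = 0 := by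
    intro v hv
    have h1 := heqH v hv
    have h2 := heqh v (hsub hv)
    have hi : (inner ℝ e v : ℝ) = inner ℝ UH v - inner ℝ Uh v := by
      rw [he, inner_sub_left]
    have ha : a e v = a UH v - a Uh v := by
      rw [he, map_sub, LinearMap.sub_apply]
    rw [hi, ha]; nlinarith [h1, h2]
  have hGed := hG (e + d) hmem
  -- expand b(e, e+d) = 0
  have hae : a e (e + d) = a e e + a e d := by rw [map_add]
  have hie : (inner ℝ e (e + d) : ℝ) = inner ℝ e e + inner ℝ e d := inner_add_right e e d
  have key : (inner ℝ e e : ℝ) + k * a e e = -((inner ℝ e d : ℝ) + k * a e d) := by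
    rw [hie, hae] at hGed; linarith
  -- positivity of b(e+d, e+d)
  have hpos : (0:ℝ) ≤ inner ℝ (e + d) (e + d) + k * a (e + d) (e + d) := by
    have h1 : (0:ℝ) ≤ inner ℝ (e + d) (e + d) := real_inner_self_nonneg
    nlinarith [hpsd (e + d)]
  have hexp : (inner ℝ (e + d) (e + d) : ℝ) + k * a (e + d) (e + d)
      = (inner ℝ e e + 2 * inner ℝ e d + inner ℝ d d : ℝ)
        + k * (a e e + 2 * a e d + a d d) := by
    have hia : (inner ℝ (e + d) (e + d) : ℝ)
        = inner ℝ e e + inner ℝ e d + inner ℝ d e + inner ℝ d d := by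
      rw [inner_add_left, inner_add_right, inner_add_right]; ring
    have haa : a (e + d) (e + d) = a e e + a e d + a d e + a d d := by
      simp only [map_add, LinearMap.add_apply]; ring
    rw [hia, haa, real_inner_comm d e, hsym d e]; ring
  have hbound : (inner ℝ e e : ℝ) + k * a e e ≤ (inner ℝ d d : ℝ) + k * a d d := by
    nlinarith [hpos, hexp, key]
  have hne : (inner ℝ e e : ℝ) = ‖e‖^2 := real_inner_self_eq_norm_sq e
  have hnd : (inner ℝ d d : ℝ) = ‖d‖^2 := real_inner_self_eq_norm_sq d
  nlinarith [hpsd e, hk]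
end
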